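/- Let ν be a rotationally invariant measure on ℝ^d with density q, let c ∈ ℝ^d be nonzero, and let R = I - 2cc^T/|c|^2. Then for every z ∈ ℝ^d and m > 0, the integral ∫_{|v|≤m} (e^{i⟨z,Rv⟩}(e^{i⟨z,c+v-Rv⟩} - 1) - i⟨z, c+v-Rv⟩) · (q(v) ∧ q(v+c)𝟙_{|v+c|≤m}) dv equals zero, provided the integrand is integrable. -/

import Mathlib

open MeasureTheory Complex
open scoped RealInnerProductSpace

/-- The reflection `R = I - 2cc^T/|c|²`. -/
noncomputable def reflectC {d : ℕ} (c v : EuclideanSpace ℝ (Fin d)) :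
    EuclideanSpace ℝ (Fin d) :=
  v - ((2 * ⟪c, v⟫) / ‖c‖ ^ 2) • c

lemma reflection_eq_reflectC {d : ℕ} (c v : EuclideanSpace ℝ (Fin d)) :
    (Submodule.reflection ((ℝ ∙ c)ᗮ)) v = reflectC c v := by
  rw [Submodule.reflection_apply, reflectC, Submodule.starProjection_orthogonal_val,
    Submodule.starProjection_singleton]
  rw [two_smul]
  norm_num [RCLike.ofReal_real_eq_id]
  module

/-- For a rotationally invariant density `q` and the reflection `R = I - 2cc^T/|c|²`,
the integral
`∫_{|v|≤m} (e^{i⟨z,Rv⟩}(e^{i⟨z,c+v-Rv⟩} - 1) - i⟨z,c+v-Rv⟩)(q(v) ∧ q(v+c)𝟙_{|v+c|≤m}) dv`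
vanishes, provided the integrand is integrable. -/
theorem reflected_char_integral_zero {d : ℕ} (q : EuclideanSpace ℝ (Fin d) → ℝ)
    (hq0 : ∀ v, 0 ≤ q v)
    (hrot : ∀ A : EuclideanSpace ℝ (Fin d) ≃ₗᵢ[ℝ] EuclideanSpace ℝ (Fin d),
      ∀ v, q (A v) = q v)
    (c : EuclideanSpace ℝ (Fin d)) (hc : c ≠ 0)
    (z : EuclideanSpace ℝ (Fin d)) (m : ℝ) (hm : 0 < m)
    (hint : IntegrableOn
      (fun v => (Complex.exp (Complex.I * (⟪z, reflectC c v⟫ : ℝ)) *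
          (Complex.exp (Complex.I * (⟪z, c + v - reflectC c v⟫ : ℝ)) - 1) -
          Complex.I * (⟪z, c + v - reflectC c v⟫ : ℝ)) *
        ((min (q v) (if ‖v + c‖ ≤ m then q (v + c) else 0) : ℝ) : ℂ))
      {v | ‖v‖ ≤ m} MeasureTheory.volume) :
    ∫ v in {v | ‖v‖ ≤ m},
        (Complex.exp (Complex.I * (⟪z, reflectC c v⟫ : ℝ)) *
          (Complex.exp (Complex.I * (⟪z, c + v - reflectC c v⟫ : ℝ)) - 1) -
          Complex.I * (⟪z, c + v - reflectC c v⟫ : ℝ)) *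
        ((min (q v) (if ‖v + c‖ ≤ m then q (v + c) else 0) : ℝ) : ℂ) = 0 := by
  set A : EuclideanSpace ℝ (Fin d) ≃ₗᵢ[ℝ] EuclideanSpace ℝ (Fin d) :=
    Submodule.reflection ((ℝ ∙ c)ᗮ) with hA
  have hAv : ∀ v, A v = reflectC c v := reflection_eq_reflectC c
  have hq : ∀ v, q (reflectC c v) = q v := fun v => by rw [← hAv]; exact hrot A v
  have hnorm : ∀ v, ‖reflectC c v‖ = ‖v‖ := fun v => by rw [← hAv]; exact A.norm_map v
  have hRc : reflectC c c = -c := by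
    rw [← hAv]; exact Submodule.reflection_orthogonalComplement_singleton_eq_neg c
  have hradd : ∀ u w, reflectC c (u + w) = reflectC c u + reflectC c w := fun u w => by
    rw [← hAv, ← hAv, ← hAv, map_add]
  have hrneg : reflectC c (-c) = c := by rw [← hAv, map_neg, hAv, hRc, neg_neg]
  have hrr : ∀ v, reflectC c (reflectC c v) = v := fun v => by
    rw [← hAv, ← hAv]; exact Submodule.reflection_reflection _ v
  set G : EuclideanSpace ℝ (Fin d) → ℂ := fun v =>
    (Complex.exp (Complex.I * (⟪z, reflectC c v⟫ : ℝ)) *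
        (Complex.exp (Complex.I * (⟪z, c + v - reflectC c v⟫ : ℝ)) - 1) -
        Complex.I * (⟪z, c + v - reflectC c v⟫ : ℝ)) *
      ((min (if ‖v‖ ≤ m then q v else 0) (if ‖v + c‖ ≤ m then q (v + c) else 0) : ℝ) : ℂ)
    with hG
  have hSmeas : MeasurableSet {v : EuclideanSpace ℝ (Fin d) | ‖v‖ ≤ m} :=
    (isClosed_le continuous_norm continuous_const).measurableSet
  have step1 : ∫ v in {v | ‖v‖ ≤ m},
      (Complex.exp (Complex.I * (⟪z, reflectC c v⟫ : ℝ)) *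
          (Complex.exp (Complex.I * (⟪z, c + v - reflectC c v⟫ : ℝ)) - 1) -
          Complex.I * (⟪z, c + v - reflectC c v⟫ : ℝ)) *
        ((min (q v) (if ‖v + c‖ ≤ m then q (v + c) else 0) : ℝ) : ℂ)
      = ∫ v in {v | ‖v‖ ≤ m}, G v := by
    refine setIntegral_congr_fun hSmeas fun v hv => ?_
    have hv' : ‖v‖ ≤ m := hv
    simp only [hG, if_pos hv']
  have step2 : ∫ v in {v | ‖v‖ ≤ m}, G v = ∫ v, G v := by
    refine setIntegral_eq_integral_of_forall_compl_eq_zero fun v hv => ?_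
    have hv' : ¬ ‖v‖ ≤ m := hv
    have hmin : (min (if ‖v‖ ≤ m then q v else 0)
        (if ‖v + c‖ ≤ m then q (v + c) else 0) : ℝ) = 0 := by
      rw [if_neg hv']
      refine min_eq_left ?_
      split <;> [exact hq0 _; exact le_refl 0]
    simp only [hG, hmin, Complex.ofReal_zero, mul_zero]
  have key : ∀ v, G (reflectC c v - c) = -G v := by
    intro v
    have hw1 : reflectC c (reflectC c v - c) = v + c := by
      rw [sub_eq_add_neg, hradd, hrr, hrneg]
    have hw2 : reflectC c v - c = reflectC c (v + c) := by
      rw [hradd, hRc, sub_eq_add_neg]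
    have hvc : reflectC c v - c + c = reflectC c v := by abel
    have n1 : ‖reflectC c v - c‖ = ‖v + c‖ := by rw [hw2, hnorm]
    have n2 : ‖reflectC c v - c + c‖ = ‖v‖ := by rw [hvc, hnorm]
    have q1 : q (reflectC c v - c) = q (v + c) := by rw [hw2, hq]
    have q2 : q (reflectC c v - c + c) = q v := by rw [hvc, hq]
    have i1 : (⟪z, reflectC c (reflectC c v - c)⟫ : ℝ)
        = ⟪z, reflectC c v⟫ + ⟪z, c + v - reflectC c v⟫ := by
      rw [hw1, ← inner_add_right]
      congr 1
      abel
    have i2 : (⟪z, c + (reflectC c v - c) - reflectC c (reflectC c v - c)⟫ : ℝ)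
        = -⟪z, c + v - reflectC c v⟫ := by
      rw [hw1, ← inner_neg_right]
      congr 1
      abel
    simp only [hG]
    rw [i1, i2, n1, n2, q1, q2, min_comm]
    set α : ℝ := ⟪z, reflectC c v⟫ with hα
    set β : ℝ := ⟪z, c + v - reflectC c v⟫ with hβ
    push_cast
    have h12 : Complex.exp (Complex.I * ((α : ℂ) + β))
        = Complex.exp (Complex.I * α) * Complex.exp (Complex.I * β) := by
      rw [← Complex.exp_add]; congr 1; ring
    have h4 : Complex.exp (Complex.I * ((α : ℂ) + β)) * Complex.exp (Complex.I * -(β : ℂ))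
        = Complex.exp (Complex.I * α) := by
      rw [← Complex.exp_add]; congr 1; ring
    linear_combination (h4 - h12) *
      ((min (if ‖v‖ ≤ m then q v else 0) (if ‖v + c‖ ≤ m then q (v + c) else 0) : ℝ) : ℂ)
  have step3 : ∫ v, G v = -∫ v, G v := by
    calc ∫ v, G v = ∫ u, G (u - c) := (integral_sub_right_eq_self G c).symm
      _ = ∫ v, G (A v - c) :=
        (A.measurePreserving.integral_comp A.toHomeomorph.measurableEmbedding
          (fun u => G (u - c))).symm
      _ = ∫ v, G (reflectC c v - c) := by simp only [hAv]
      _ = ∫ v, -G v := by simp only [key]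
      _ = -∫ v, G v := integral_neg _
  have hzero : ∫ v, G v = 0 := by linear_combination step3 / 2
  rw [step1, step2, hzero]
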